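/- Let X, Y, A, B be finite sets and p an NS correlation over (X,Y,A,B). Then p is local if and only if there exist a complex Hilbert space H, a unit vector ξ∈H, and a locally dilatable NS operator matrix (P_{xy,ab}) over (X,Y,A,B) on H such that p(a,b|x,y) = ⟨P_{xy,ab}ξ, ξ⟩ for all x∈X, y∈Y, a∈A, b∈B. -/

import Mathlib

open scoped ComplexOrder

namespace LocalNSAux

open ContinuousLinearMap in
lemma clm_nonneg_iff' {K : Type*} [NormedAddCommGroup K] [InnerProductSpace ℂ K]
    [CompleteSpace K] (T : K →L[ℂ] K) :
    0 ≤ T ↔ ∀ η : K, 0 ≤ (inner ℂ (T η) η : ℂ) := by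
  rw [ContinuousLinearMap.nonneg_iff_isPositive, ContinuousLinearMap.isPositive_iff_complex]
  refine forall_congr' fun η => ?_
  constructor
  · rintro ⟨h1, h2⟩
    rw [← h1]
    exact (RCLike.ofReal_nonneg (K := ℂ)).mpr h2
  · intro h
    obtain ⟨hre, him⟩ := Complex.le_def.mp h
    simp only [Complex.zero_re, Complex.zero_im] at hre him
    constructor
    · apply Complex.ext <;> simp [RCLike.re_to_complex, ← him]
    · simpa [RCLike.re_to_complex] using hre

variable {K : Type*} [NormedAddCommGroup K] [InnerProductSpace ℂ K] [CompleteSpace K]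

lemma commute_cfcHom' {T S : K →L[ℂ] K} (hS : IsSelfAdjoint S) (h : Commute T S)
    (g : C(spectrum ℝ S, ℝ)) : Commute T (cfcHom hS (R := ℝ) g) := by
  classical
  let W : Subalgebra ℝ C(spectrum ℝ S, ℝ) :=
  { carrier := {g | Commute T (cfcHom hS (R := ℝ) g)}
    mul_mem' := fun {g₁ g₂} hg₁ hg₂ => by
      simpa [map_mul] using Commute.mul_right hg₁ hg₂
    add_mem' := fun {g₁ g₂} hg₁ hg₂ => by
      simpa [map_add] using Commute.add_right hg₁ hg₂
    algebraMap_mem' := fun r => by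
      show Commute T (cfcHom hS (R := ℝ) (algebraMap ℝ _ r))
      rw [AlgHomClass.commutes]
      simpa [Algebra.algebraMap_eq_smul_one] using (Commute.one_right T).smul_right r }
  have hWc : IsClosed (W : Set C(spectrum ℝ S, ℝ)) := by
    have : (W : Set C(spectrum ℝ S, ℝ)) =
        {g | T * cfcHom hS (R := ℝ) g = cfcHom hS (R := ℝ) g * T} := rfl
    rw [this]
    exact isClosed_eq (continuous_const.mul (cfcHom_isClosedEmbedding hS).continuous)
      ((cfcHom_isClosedEmbedding hS).continuous.mul continuous_const)
  have hid : (ContinuousMap.restrict (spectrum ℝ S) (ContinuousMap.id ℝ)) ∈ W := by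
    show Commute T _
    rw [cfcHom_id hS]
    exact h
  have hsep : W.SeparatesPoints := by
    intro u v huv
    exact ⟨_, ⟨(ContinuousMap.restrict (spectrum ℝ S) (ContinuousMap.id ℝ)), hid, rfl⟩,
      by simpa [Subtype.ext_iff] using huv⟩
  have htop := ContinuousMap.subalgebra_topologicalClosure_eq_top_of_separatesPoints W hsep
  have h1 : g ∈ W.topologicalClosure := by rw [htop]; trivial
  have h2 : g ∈ closure (W : Set C(spectrum ℝ S, ℝ)) := h1
  rwa [hWc.closure_eq] at h2

lemma commute_cfc' {T S : K →L[ℂ] K} (hS : IsSelfAdjoint S) (h : Commute T S) (f : ℝ → ℝ) :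
    Commute T (cfc f S) := by
  by_cases hf : ContinuousOn f (spectrum ℝ S)
  · rw [cfc_apply f S hS hf]
    exact commute_cfcHom' hS h _
  · rw [cfc_apply_of_not_continuousOn S hf]
    exact Commute.zero_right T

lemma clm_mul_nonneg_of_commute {S T : K →L[ℂ] K} (hS : 0 ≤ S) (hT : 0 ≤ T)
    (h : Commute S T) : 0 ≤ S * T := by
  have hSsa : IsSelfAdjoint S := IsSelfAdjoint.of_nonneg hS
  set R := cfc Real.sqrt S with hR
  have hRsa : IsSelfAdjoint R := cfc_predicate Real.sqrt S
  have hRR : R * R = S := by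
    rw [hR, ← cfc_mul Real.sqrt Real.sqrt S]
    have hcg : cfc (fun x => Real.sqrt x * Real.sqrt x) S = cfc id S :=
      cfc_congr fun x hx => Real.mul_self_sqrt (spectrum_nonneg_of_nonneg hS hx)
    rw [hcg]
    exact cfc_id ℝ S
  have hcomm : Commute T R := commute_cfc' hSsa h.symm Real.sqrt
  have key : 0 ≤ star R * T * R := star_left_conjugate_nonneg hT R
  rw [hRsa.star_eq] at key
  calc (0:K →L[ℂ] K) ≤ R * T * R := key
  _ = S * T := by rw [mul_assoc, hcomm.eq, ← mul_assoc, hRR]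

lemma sum_ite_prod_eq {ι κ : Type*} [Fintype ι] [Fintype κ] [DecidableEq ι] [DecidableEq κ]
    {R : Type*} [CommRing R] (G : ι → κ → R) (h1 : ∀ i, ∑ c, G i c = 1)
    (x : ι) (a : κ) :
    ∑ g : ι → κ, (if g x = a then ∏ i, G i (g i) else 0) = G x a := by
  classical
  have key : ∀ g : ι → κ,
      (if g x = a then ∏ i, G i (g i) else 0)
        = ∏ i, (if i = x then (if g i = a then G i (g i) else 0) else G i (g i)) := by
    intro g
    by_cases hg : g x = a
    · rw [if_pos hg]
      refine (Finset.prod_congr rfl fun i _ => ?_)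
      by_cases hix : i = x
      · subst hix; rw [if_pos rfl, if_pos hg]
      · rw [if_neg hix]
    · rw [if_neg hg]
      refine (Finset.prod_eq_zero (Finset.mem_univ x) ?_).symm
      rw [if_pos rfl, if_neg hg]
  rw [Finset.sum_congr rfl fun g _ => key g]
  have hinter := Finset.prod_univ_sum (fun _ : ι => (Finset.univ : Finset κ))
      (fun i c => if i = x then (if c = a then G i c else 0) else G i c)
  rw [Fintype.piFinset_univ] at hinter
  rw [← hinter]
  have hcol : ∀ i, (∑ c, if i = x then (if c = a then G i c else 0) else G i c)
      = if i = x then G i a else 1 := by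
    intro i
    by_cases hix : i = x
    · simp only [if_pos hix]
      simp
    · simp only [if_neg hix]
      exact h1 i
  rw [Finset.prod_congr rfl fun i _ => hcol i]
  simp

lemma sum_prod_eq_one {ι κ : Type*} [Fintype ι] [Fintype κ] [DecidableEq ι]
    {R : Type*} [CommRing R] (G : ι → κ → R) (h1 : ∀ i, ∑ c, G i c = 1) :
    ∑ g : ι → κ, ∏ i, G i (g i) = 1 := by
  classical
  have hinter := Finset.prod_univ_sum (fun _ : ι => (Finset.univ : Finset κ)) (fun i c => G i c)
  rw [Fintype.piFinset_univ] at hinter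
  rw [← hinter]
  simp [h1]

noncomputable def diagCLM {n : ℕ} (d : Fin n → ℝ) :
    EuclideanSpace ℂ (Fin n) →L[ℂ] EuclideanSpace ℂ (Fin n) :=
  LinearMap.toContinuousLinearMap
  { toFun := fun v => (WithLp.toLp 2 (fun i => (d i : ℂ) * v i) : EuclideanSpace ℂ (Fin n))
    map_add' := fun v w => by
      ext i
      simp [mul_add]
    map_smul' := fun c v => by
      ext i
      simp
      ring }

@[simp] lemma diagCLM_apply {n : ℕ} (d : Fin n → ℝ) (v : EuclideanSpace ℂ (Fin n)) (i : Fin n) :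
    diagCLM d v i = (d i : ℂ) * v i := rfl

lemma diagCLM_sum {n : ℕ} {ι : Type*} (s : Finset ι) (d : ι → Fin n → ℝ) :
    ∑ j ∈ s, diagCLM (d j) = diagCLM (fun i => ∑ j ∈ s, d j i) := by
  ext v i
  rw [ContinuousLinearMap.sum_apply]
  have : (∑ j ∈ s, diagCLM (d j) v) i = ∑ j ∈ s, diagCLM (d j) v i := by
    induction s using Finset.cons_induction with
    | empty => rfl
    | cons a s ha ih =>
      rw [Finset.sum_cons, Finset.sum_cons, ← ih]
      rfl
  rw [this]
  simp [Finset.sum_mul]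

lemma diagCLM_inner {n : ℕ} (d : Fin n → ℝ) (v : EuclideanSpace ℂ (Fin n)) :
    (inner ℂ (diagCLM d v) v : ℂ) = ∑ i, (d i : ℂ) * (‖v i‖^2 : ℝ) := by
  rw [PiLp.inner_apply]
  refine Finset.sum_congr rfl fun i _ => ?_
  simp only [RCLike.inner_apply, diagCLM_apply, map_mul, Complex.conj_ofReal, mul_assoc,
    RCLike.conj_mul]
  push_cast
  ring_nf
  rw [mul_comm (v.ofLp i), mul_assoc, RCLike.mul_conj]
  rfl

lemma diagCLM_inner_nonneg {n : ℕ} (d : Fin n → ℝ) (hd : ∀ i, 0 ≤ d i)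
    (v : EuclideanSpace ℂ (Fin n)) : 0 ≤ (inner ℂ (diagCLM d v) v : ℂ) := by
  rw [diagCLM_inner]
  refine Finset.sum_nonneg fun i _ => mul_nonneg ?_ ?_
  · exact_mod_cast hd i
  · exact_mod_cast sq_nonneg ‖v i‖

end LocalNSAux

/-- A channel from `V` to `W` : `E v w` stands for `𝓔(w|v)`. -/
def IsChannel {V W : Type*} [Fintype W] (E : V → W → ℝ) : Prop :=
  (∀ v w, 0 ≤ E v w) ∧ ∀ v, ∑ w, E v w = 1

/-- An NS correlation over `(X, Y, A, B)`: `p x y a b` stands for `p(a,b|x,y)`. -/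
def IsNSCorr4 {X Y A B : Type*} [Fintype A] [Fintype B]
    (p : X → Y → A → B → ℝ) : Prop :=
  (∀ x y a b, 0 ≤ p x y a b) ∧
  (∀ x y, ∑ a, ∑ b, p x y a b = 1) ∧
  (∀ x y y' a, ∑ b, p x y a b = ∑ b, p x y' a b) ∧
  (∀ x x' y b, ∑ a, p x y a b = ∑ a, p x' y a b)

/-- A local NS correlation: a finite convex combination of products of channels. -/
def IsLocalCorr4 {X Y A B : Type*} [Fintype A] [Fintype B]
    (p : X → Y → A → B → ℝ) : Prop :=
  ∃ (n : ℕ) (lam : Fin n → ℝ) (e : Fin n → X → A → ℝ) (f : Fin n → Y → B → ℝ),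
    (∀ i, 0 ≤ lam i) ∧ (∑ i, lam i = 1) ∧
    (∀ i, IsChannel (e i)) ∧ (∀ i, IsChannel (f i)) ∧
    ∀ x y a b, p x y a b = ∑ i, lam i * (e i x a * f i y b)

/-- An NS operator matrix over `(X, Y, A, B)` on a Hilbert space `H`. -/
def IsNSOpMat {X Y A B : Type*} [Fintype A] [Fintype B]
    {H : Type*} [NormedAddCommGroup H] [InnerProductSpace ℂ H]
    (P : X → Y → A → B → (H →L[ℂ] H)) : Prop :=
  (∀ x y a b (η : H), 0 ≤ (inner ℂ ((P x y a b) η) η : ℂ)) ∧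
  (∀ x y y' a, ∑ b, P x y a b = ∑ b, P x y' a b) ∧
  (∀ x x' y b, ∑ a, P x y a b = ∑ a, P x' y a b) ∧
  (∀ x y, ∑ a, ∑ b, P x y a b = 1)

/-- A locally dilatable NS operator matrix: `P_{xy,ab} = V* E_{x,a} F_{y,b} V` for an
isometry `V` and POVM's `(E_{x,a})`, `(F_{y,b})` forming a commutative family. -/
def IsLocallyDilatable {X Y A B : Type*} [Fintype A] [Fintype B]
    {H : Type*} [NormedAddCommGroup H] [InnerProductSpace ℂ H] [CompleteSpace H]
    (P : X → Y → A → B → (H →L[ℂ] H)) : Prop :=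
  ∃ (K : Type) (_ : NormedAddCommGroup K) (_ : InnerProductSpace ℂ K) (_ : CompleteSpace K)
    (V : H →L[ℂ] K) (E : X → A → K →L[ℂ] K) (F : Y → B → K →L[ℂ] K),
    (∀ η : H, ‖V η‖ = ‖η‖) ∧
    (∀ x a (η : K), 0 ≤ (inner ℂ ((E x a) η) η : ℂ)) ∧
    (∀ y b (η : K), 0 ≤ (inner ℂ ((F y b) η) η : ℂ)) ∧
    (∀ x, ∑ a, E x a = 1) ∧ (∀ y, ∑ b, F y b = 1) ∧
    (∀ x a x' a', Commute (E x a) (E x' a')) ∧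
    (∀ y b y' b', Commute (F y b) (F y' b')) ∧
    (∀ x a y b, Commute (E x a) (F y b)) ∧
    (∀ x y a b,
      P x y a b = (ContinuousLinearMap.adjoint V) ∘L ((E x a) ∘L ((F y b) ∘L V)))

set_option maxHeartbeats 1000000 in
set_option synthInstance.maxHeartbeats 400000 in
private theorem LocalNSAux.bwd {X Y A B : Type*}
    [Fintype X] [Fintype Y] [Fintype A] [Fintype B]
    (p : X → Y → A → B → ℝ)
    (K : Type) [NormedAddCommGroup K] [InnerProductSpace ℂ K] [CompleteSpace K]
    (η : K) (hη : ‖η‖ = 1)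
    (E : X → A → K →L[ℂ] K) (F : Y → B → K →L[ℂ] K)
    (hEpos : ∀ x a (v : K), 0 ≤ (inner ℂ ((E x a) v) v : ℂ))
    (hFpos : ∀ y b (v : K), 0 ≤ (inner ℂ ((F y b) v) v : ℂ))
    (hE1 : ∀ x, ∑ a, E x a = 1) (hF1 : ∀ y, ∑ b, F y b = 1)
    (hEE : ∀ x a x' a', Commute (E x a) (E x' a'))
    (hFF : ∀ y b y' b', Commute (F y b) (F y' b'))
    (hEF : ∀ x a y b, Commute (E x a) (F y b))
    (hpeq : ∀ x y a b, p x y a b = (inner ℂ (E x a (F y b η)) η : ℂ).re) :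
    IsLocalCorr4 p := by
  classical
  have hEposL : ∀ x a, (0 : K →L[ℂ] K) ≤ E x a := fun x a => (LocalNSAux.clm_nonneg_iff' _).mpr (hEpos x a)
  have hFposL : ∀ y b, (0 : K →L[ℂ] K) ≤ F y b := fun y b => (LocalNSAux.clm_nonneg_iff' _).mpr (hFpos y b)
  -- the commutative algebra
  set S₀ : Set (K →L[ℂ] K) :=
    (Set.range fun q : X × A => E q.1 q.2) ∪ (Set.range fun q : Y × B => F q.1 q.2) with hS₀
  set M : Subalgebra ℂ (K →L[ℂ] K) :=
    Subalgebra.centralizer ℂ ((Subalgebra.centralizer ℂ S₀ : Subalgebra ℂ (K →L[ℂ] K)) :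
      Set (K →L[ℂ] K)) with hM
  have hS₀comm : ∀ u ∈ S₀, ∀ v ∈ S₀, u * v = v * u := by
    rintro u hu v hv
    rcases hu with ⟨q, rfl⟩ | ⟨q, rfl⟩ <;> rcases hv with ⟨r, rfl⟩ | ⟨r, rfl⟩
    · exact (hEE q.1 q.2 r.1 r.2).eq
    · exact (hEF q.1 q.2 r.1 r.2).eq
    · exact (hEF r.1 r.2 q.1 q.2).eq.symm
    · exact (hFF q.1 q.2 r.1 r.2).eq
  have hS₀sub : S₀ ⊆ (Subalgebra.centralizer ℂ S₀ : Set (K →L[ℂ] K)) := by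
    intro u hu
    rw [SetLike.mem_coe, Subalgebra.mem_centralizer_iff]
    intro g hg
    exact hS₀comm g hg u hu
  have hMle : M ≤ Subalgebra.centralizer ℂ S₀ :=
    Subalgebra.centralizer_le ℂ _ _ hS₀sub
  have hMcomm : ∀ u v : M, (u.1 : K →L[ℂ] K) * v.1 = v.1 * u.1 := by
    intro u v
    have hv : v.1 ∈ Subalgebra.centralizer ℂ S₀ := hMle v.2
    exact ((Subalgebra.mem_centralizer_iff ℂ).mp u.2 v.1 hv).symm
  letI : CommRing M :=
    { (inferInstance : Ring M) with
      mul_comm := fun u v => Subtype.ext (hMcomm u v) }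
  have hEmem : ∀ x a, E x a ∈ M := by
    intro x a
    refine (Subalgebra.mem_centralizer_iff ℂ).mpr fun g hg => ?_
    rw [SetLike.mem_coe] at hg
    exact (((Subalgebra.mem_centralizer_iff ℂ).mp hg) (E x a) (Or.inl ⟨(x, a), rfl⟩)).symm
  have hFmem : ∀ y b, F y b ∈ M := by
    intro y b
    refine (Subalgebra.mem_centralizer_iff ℂ).mpr fun g hg => ?_
    rw [SetLike.mem_coe] at hg
    exact (((Subalgebra.mem_centralizer_iff ℂ).mp hg) (F y b) (Or.inr ⟨(y, b), rfl⟩)).symm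
  set Ebar : X → A → M := fun x a => ⟨E x a, hEmem x a⟩ with hEbar
  set Fbar : Y → B → M := fun y b => ⟨F y b, hFmem y b⟩ with hFbar
  have hEbar1 : ∀ x, ∑ a, Ebar x a = 1 := by
    intro x
    apply Subtype.ext
    rw [AddSubmonoidClass.coe_finset_sum]
    exact hE1 x
  have hFbar1 : ∀ y, ∑ b, Fbar y b = 1 := by
    intro y
    apply Subtype.ext
    rw [AddSubmonoidClass.coe_finset_sum]
    exact hF1 y
  -- products
  set PE : (X → A) → M := fun g => ∏ x, Ebar x (g x) with hPE
  set PF : (Y → B) → M := fun g => ∏ y, Fbar y (g y) with hPF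
  -- positivity
  have hmulpos : ∀ u v : M, 0 ≤ (u.1 : K →L[ℂ] K) → 0 ≤ (v.1 : K →L[ℂ] K) →
      0 ≤ ((u * v).1 : K →L[ℂ] K) := by
    intro u v hu hv
    show (0 : K →L[ℂ] K) ≤ u.1 * v.1
    exact LocalNSAux.clm_mul_nonneg_of_commute hu hv (hMcomm u v)
  have h1pos : (0 : K →L[ℂ] K) ≤ ((1 : M).1 : K →L[ℂ] K) := by
    show (0 : K →L[ℂ] K) ≤ 1
    rw [ContinuousLinearMap.nonneg_iff_isPositive]
    exact ContinuousLinearMap.isPositive_one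
  have hPEpos : ∀ g, (0 : K →L[ℂ] K) ≤ (PE g).1 :=
    fun g => Finset.prod_induction _ (fun m : M => 0 ≤ (m.1 : K →L[ℂ] K))
      (fun u v hu hv => hmulpos u v hu hv) h1pos (fun x _ => hEposL x (g x))
  have hPFpos : ∀ g, (0 : K →L[ℂ] K) ≤ (PF g).1 :=
    fun g => Finset.prod_induction _ (fun m : M => 0 ≤ (m.1 : K →L[ℂ] K))
      (fun u v hu hv => hmulpos u v hu hv) h1pos (fun y _ => hFposL y (g y))
  -- index
  set n := Fintype.card ((X → A) × (Y → B)) with hn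
  set σ : Fin n ≃ ((X → A) × (Y → B)) := (Fintype.equivFin _).symm with hσ
  set T : ((X → A) × (Y → B)) → (K →L[ℂ] K) := fun w => ((PE w.1 * PF w.2 : M).1) with hT
  have hTpos : ∀ w, (0 : K →L[ℂ] K) ≤ T w :=
    fun w => hmulpos _ _ (hPEpos w.1) (hPFpos w.2)
  refine ⟨n, fun i => (inner ℂ (T (σ i) η) η : ℂ).re,
    fun i x a => if (σ i).1 x = a then 1 else 0,
    fun i y b => if (σ i).2 y = b then 1 else 0, ?_, ?_, ?_, ?_, ?_⟩
  · -- lam nonneg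
    intro i
    have := ((LocalNSAux.clm_nonneg_iff' _).mp (hTpos (σ i))) η
    obtain ⟨hre, _⟩ := Complex.le_def.mp this
    simpa using hre
  · -- sum lam = 1
    have hstep : ∀ i : Fin n, (inner ℂ (T (σ i) η) η : ℂ).re
        = (fun w => (inner ℂ (T w η) η : ℂ).re) (σ i) := fun i => rfl
    rw [Finset.sum_congr rfl fun i _ => hstep i, Equiv.sum_comp σ
      (fun w => (inner ℂ (T w η) η : ℂ).re)]
    rw [← Complex.re_sum]
    have hsum : ∑ w : (X → A) × (Y → B), (inner ℂ (T w η) η : ℂ)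
        = inner ℂ ((∑ w : (X → A) × (Y → B), T w) η) η := by
      rw [ContinuousLinearMap.sum_apply, sum_inner]
    rw [hsum]
    have hTsum : ∑ w : (X → A) × (Y → B), T w = 1 := by
      have : ∑ w : (X → A) × (Y → B), (PE w.1 * PF w.2 : M) = 1 := by
        rw [Fintype.sum_prod_type, ← Finset.sum_mul_sum]
        rw [hPE, hPF]
        rw [LocalNSAux.sum_prod_eq_one (fun x a => Ebar x a) hEbar1,
          LocalNSAux.sum_prod_eq_one (fun y b => Fbar y b) hFbar1, one_mul]
      calc ∑ w : (X → A) × (Y → B), T w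
          = ((∑ w : (X → A) × (Y → B), (PE w.1 * PF w.2 : M)).1 : K →L[ℂ] K) := by
            rw [AddSubmonoidClass.coe_finset_sum]
        _ = 1 := by rw [this]; rfl
    rw [hTsum, ContinuousLinearMap.one_apply]
    have := inner_self_eq_norm_sq (𝕜 := ℂ) η
    rw [RCLike.re_to_complex] at this
    rw [this, hη]
    norm_num
  · -- e channel
    intro i
    constructor
    · intro x a
      by_cases h : (σ i).1 x = a <;> simp [h]
    · intro x
      simp
  · -- f channel
    intro i
    constructor
    · intro y b
      by_cases h : (σ i).2 y = b <;> simp [h]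
    · intro y
      simp
  · -- the correlation identity
    intro x y a b
    have hkeyM : ∑ w : (X → A) × (Y → B),
        (if w.1 x = a ∧ w.2 y = b then (PE w.1 * PF w.2 : M) else 0)
        = Ebar x a * Fbar y b := by
      rw [Fintype.sum_prod_type]
      have hsplit : ∀ (g : X → A) (h : Y → B),
          (if g x = a ∧ h y = b then (PE g * PF h : M) else 0)
          = (if g x = a then PE g else 0) * (if h y = b then PF h else 0) := by
        intro g h
        by_cases h1 : g x = a <;> by_cases h2 : h y = b <;> simp [h1, h2]
      rw [Finset.sum_congr rfl fun g _ => Finset.sum_congr rfl fun h _ => hsplit g h]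
      rw [← Finset.sum_mul_sum]
      rw [hPE, hPF, LocalNSAux.sum_ite_prod_eq (fun x a => Ebar x a) hEbar1 x a,
        LocalNSAux.sum_ite_prod_eq (fun y b => Fbar y b) hFbar1 y b]
    have hkey : ∑ w : (X → A) × (Y → B),
        (if w.1 x = a ∧ w.2 y = b then T w else 0) = E x a * F y b := by
      have := congrArg (Subtype.val) hkeyM
      rw [AddSubmonoidClass.coe_finset_sum] at this
      calc ∑ w : (X → A) × (Y → B), (if w.1 x = a ∧ w.2 y = b then T w else 0)
          = ∑ w : (X → A) × (Y → B),
            ((if w.1 x = a ∧ w.2 y = b then (PE w.1 * PF w.2 : M) else 0).1 : K →L[ℂ] K) := by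
            refine Finset.sum_congr rfl fun w _ => ?_
            by_cases hc : w.1 x = a ∧ w.2 y = b <;> simp [hc, hT]
        _ = ((Ebar x a * Fbar y b : M).1 : K →L[ℂ] K) := this
        _ = E x a * F y b := rfl
    -- now compute
    have hterm : ∀ i : Fin n,
        (inner ℂ (T (σ i) η) η : ℂ).re *
          ((if (σ i).1 x = a then (1:ℝ) else 0) * (if (σ i).2 y = b then (1:ℝ) else 0))
        = (inner ℂ ((if (σ i).1 x = a ∧ (σ i).2 y = b then T (σ i) else 0) η) η : ℂ).re := by
      intro i
      by_cases h1 : (σ i).1 x = a <;> by_cases h2 : (σ i).2 y = b <;>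
        simp [h1, h2]
    rw [Finset.sum_congr rfl fun i _ => hterm i]
    rw [Equiv.sum_comp σ
      (fun w => (inner ℂ ((if w.1 x = a ∧ w.2 y = b then T w else 0) η) η : ℂ).re)]
    rw [← Complex.re_sum]
    have : ∑ w : (X → A) × (Y → B),
        (inner ℂ ((if w.1 x = a ∧ w.2 y = b then T w else 0) η) η : ℂ)
        = inner ℂ ((E x a * F y b) η) η := by
      rw [← hkey, ContinuousLinearMap.sum_apply, sum_inner]
    rw [this, ContinuousLinearMap.mul_apply]
    exact hpeq x y a b


set_option maxHeartbeats 1000000 in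
/-- An NS correlation is local iff it arises from a locally dilatable NS operator matrix
and a unit vector. -/
theorem local_iff_locallyDilatable {X Y A B : Type*}
    [Fintype X] [Fintype Y] [Fintype A] [Fintype B]
    (p : X → Y → A → B → ℝ) (hp : IsNSCorr4 p) :
    IsLocalCorr4 p ↔
      ∃ (H : Type) (_ : NormedAddCommGroup H) (_ : InnerProductSpace ℂ H)
        (_ : CompleteSpace H) (ξ : H) (P : X → Y → A → B → (H →L[ℂ] H)),
        ‖ξ‖ = 1 ∧ IsNSOpMat P ∧ IsLocallyDilatable P ∧
        ∀ x y a b, (p x y a b : ℂ) = inner ℂ ((P x y a b) ξ) ξ := by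
  classical
  constructor
  · -- forward direction
    rintro ⟨n, lam, e, f, hlam0, hlam1, he, hf, hpe⟩
    open LocalNSAux in
    set ξ : EuclideanSpace ℂ (Fin n) := WithLp.toLp 2 (fun i => (Real.sqrt (lam i) : ℂ)) with hξ
    have hξi : ∀ i, (‖ξ i‖^2 : ℝ) = lam i := by
      intro i
      rw [hξ]
      simp only [PiLp.toLp_apply, Complex.norm_real, Real.norm_eq_abs, abs_of_nonneg (Real.sqrt_nonneg _),
        Real.sq_sqrt (hlam0 i)]
    refine ⟨EuclideanSpace ℂ (Fin n), inferInstance, inferInstance, inferInstance, ξ,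
      fun x y a b => LocalNSAux.diagCLM (fun i => e i x a * f i y b), ?_, ⟨?_, ?_, ?_, ?_⟩, ?_, ?_⟩
    · rw [EuclideanSpace.norm_eq]
      rw [Finset.sum_congr rfl fun i _ => hξi i, hlam1, Real.sqrt_one]
    · intro x y a b η
      exact LocalNSAux.diagCLM_inner_nonneg _
        (fun i => mul_nonneg ((he i).1 x a) ((hf i).1 y b)) η
    · intro x y y' a
      rw [LocalNSAux.diagCLM_sum, LocalNSAux.diagCLM_sum]
      congr 1
      funext i
      rw [← Finset.mul_sum, ← Finset.mul_sum, (hf i).2 y, (hf i).2 y']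
    · intro x x' y b
      rw [LocalNSAux.diagCLM_sum, LocalNSAux.diagCLM_sum]
      congr 1
      funext i
      rw [← Finset.sum_mul, ← Finset.sum_mul, (he i).2 x, (he i).2 x']
    · intro x y
      have h1 : ∀ a : A, ∑ b, LocalNSAux.diagCLM (fun i => e i x a * f i y b)
          = LocalNSAux.diagCLM (fun i => e i x a) := by
        intro a
        rw [LocalNSAux.diagCLM_sum]
        congr 1
        funext i
        rw [← Finset.mul_sum, (hf i).2 y, mul_one]
      rw [Finset.sum_congr rfl fun a _ => h1 a, LocalNSAux.diagCLM_sum]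
      have h2 : (fun i => ∑ a, e i x a) = fun _ : Fin n => (1:ℝ) := by
        funext i
        exact (he i).2 x
      rw [h2]
      ext v i
      simp
    · refine ⟨EuclideanSpace ℂ (Fin n), inferInstance, inferInstance, inferInstance,
        ContinuousLinearMap.id ℂ _,
        fun x a => LocalNSAux.diagCLM (fun i => e i x a),
        fun y b => LocalNSAux.diagCLM (fun i => f i y b),
        fun η => rfl, ?_, ?_, ?_, ?_, ?_, ?_, ?_, ?_⟩
      · exact fun x a η => LocalNSAux.diagCLM_inner_nonneg _ (fun i => (he i).1 x a) η
      · exact fun y b η => LocalNSAux.diagCLM_inner_nonneg _ (fun i => (hf i).1 y b) η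
      · intro x
        rw [LocalNSAux.diagCLM_sum]
        have h2 : (fun i => ∑ a, e i x a) = fun _ : Fin n => (1:ℝ) := by
          funext i; exact (he i).2 x
        rw [h2]
        ext v i; simp
      · intro y
        rw [LocalNSAux.diagCLM_sum]
        have h2 : (fun i => ∑ b, f i y b) = fun _ : Fin n => (1:ℝ) := by
          funext i; exact (hf i).2 y
        rw [h2]
        ext v i; simp
      · intro x a x' a'
        show _ = _
        ext v i
        simp [ContinuousLinearMap.mul_apply]
        ring
      · intro y b y' b'
        show _ = _
        ext v i
        simp [ContinuousLinearMap.mul_apply]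
        ring
      · intro x a y b
        show _ = _
        ext v i
        simp [ContinuousLinearMap.mul_apply]
        ring
      · intro x y a b
        rw [ContinuousLinearMap.adjoint_id]
        ext v i
        simp [mul_assoc]
    · intro x y a b
      rw [LocalNSAux.diagCLM_inner]
      have h3 : ∀ i, ((e i x a * f i y b : ℝ) : ℂ) * ((‖ξ i‖^2 : ℝ) : ℂ)
          = ((lam i * (e i x a * f i y b) : ℝ) : ℂ) := by
        intro i
        rw [hξi i]
        push_cast
        ring
      rw [Finset.sum_congr rfl fun i _ => h3 i, ← Complex.ofReal_sum]
      rw [hpe x y a b]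
  · -- backward direction
    rintro ⟨H, _, _, _, ξ, P, hξ, hNS, hDil, hpP⟩
    obtain ⟨K, _, _, _, V, E, F, hViso, hEpos, hFpos, hE1, hF1, hEE, hFF, hEF, hPdef⟩ := hDil
    have hη : ‖V ξ‖ = 1 := by rw [hViso, hξ]
    have hpeq : ∀ x y a b, p x y a b = (inner ℂ (E x a (F y b (V ξ))) (V ξ) : ℂ).re := by
      intro x y a b
      have h1 : (p x y a b : ℂ) = inner ℂ (E x a (F y b (V ξ))) (V ξ) := by
        rw [hpP x y a b, hPdef x y a b]
        simp only [ContinuousLinearMap.comp_apply]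
        rw [ContinuousLinearMap.adjoint_inner_left]
      rw [← Complex.ofReal_re (p x y a b), h1]
    exact LocalNSAux.bwd p K (V ξ) hη E F hEpos hFpos hE1 hF1 hEE hFF hEF hpeq
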